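/- arXiv:2507.02218 — 2 statements merged into one kernel-verified Lean document; each statement's English description precedes it below -/
import Mathlib

section
/- For the canonically oriented quiver Q of type D̃_6 and λ ∈ k with λ ∉ {0, 1}, the representation M_λ is indecomposable (equivalently, its endomorphism ring is local, equivalently End(M_λ) ≅ k). -/
open Quiver

/-- A representation of a quiver `V` over a field `k`. -/
structure QuivRep (k : Type) [Field k] (V : Type) [Quiver.{0} V] where
  space : V → Type
  [acg : ∀ i, AddCommGroup (space i)]
  [mod : ∀ i, Module k (space i)]
  map : ∀ {i j : V}, (i ⟶ j) → (space i →ₗ[k] space j)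

attribute [instance] QuivRep.acg QuivRep.mod

/-- The arrows of the canonically oriented quiver of type `D̃₆`: vertices `1,…,7`
(indexed by `Fin 7`, so vertex `m` corresponds to `m - 1 : Fin 7`) and arrows
`1→3, 2→3, 3→4, 4→5, 5→6, 5→7`. -/
inductive D6Arrow : Fin 7 → Fin 7 → Type
  | a13 : D6Arrow 0 2
  | a23 : D6Arrow 1 2
  | a34 : D6Arrow 2 3
  | a45 : D6Arrow 3 4
  | a56 : D6Arrow 4 5
  | a57 : D6Arrow 4 6

instance : Quiver.{0} (Fin 7) := ⟨D6Arrow⟩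

/-- The vertex spaces of the representation `M_λ`: `k` at vertices `1, 2, 6, 7` and
`k²` at vertices `3, 4, 5`. -/
def MlambdaVtx (k : Type) (i : Fin 7) : Type :=
  match i with
  | 0 => k
  | 1 => k
  | 2 => k × k
  | 3 => k × k
  | 4 => k × k
  | 5 => k
  | 6 => k

instance (k : Type) [Field k] (i : Fin 7) : AddCommGroup (MlambdaVtx k i) :=
  match i with
  | 0 => inferInstanceAs (AddCommGroup k)
  | 1 => inferInstanceAs (AddCommGroup k)
  | 2 => inferInstanceAs (AddCommGroup (k × k))
  | 3 => inferInstanceAs (AddCommGroup (k × k))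
  | 4 => inferInstanceAs (AddCommGroup (k × k))
  | 5 => inferInstanceAs (AddCommGroup k)
  | 6 => inferInstanceAs (AddCommGroup k)

instance (k : Type) [Field k] (i : Fin 7) : Module k (MlambdaVtx k i) :=
  match i with
  | 0 => inferInstanceAs (Module k k)
  | 1 => inferInstanceAs (Module k k)
  | 2 => inferInstanceAs (Module k (k × k))
  | 3 => inferInstanceAs (Module k (k × k))
  | 4 => inferInstanceAs (Module k (k × k))
  | 5 => inferInstanceAs (Module k k)
  | 6 => inferInstanceAs (Module k k)

/-- The regular representation `M_λ` of the canonically oriented quiver of type `D̃₆`: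
arrow maps `[1,1]ᵀ : k → k²` along `1→3`, `[1,0]ᵀ : k → k²` along `2→3`, identity along
`3→4` and `4→5`, `[1,0] : k² → k` along `5→6` and `[1,λ] : k² → k` along `5→7`. -/
def Mlambda (k : Type) [Field k] (lam : k) : QuivRep k (Fin 7) where
  space := MlambdaVtx k
  map {_ _} a :=
    match a with
    | .a13 => (LinearMap.id.prod LinearMap.id : k →ₗ[k] k × k)
    | .a23 => (LinearMap.id.prod 0 : k →ₗ[k] k × k)
    | .a34 => LinearMap.id
    | .a45 => LinearMap.id
    | .a56 => LinearMap.fst k k k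
    | .a57 => LinearMap.fst k k k + lam • LinearMap.snd k k k

/-- Isomorphism of quiver representations: a family of vertex-wise linear isomorphisms
commuting with all the arrow maps. -/
def QuivRep.IsIsoTo {k : Type} [Field k] {V : Type} [Quiver.{0} V]
    (M N : QuivRep k V) : Prop :=
  ∃ e : ∀ i, M.space i ≃ₗ[k] N.space i,
    ∀ (i j : V) (a : i ⟶ j),
      (e j).toLinearMap.comp (M.map a) = (N.map a).comp (e i).toLinearMap

/-- The direct sum of two representations: vertex-wise direct sums, with
block-diagonal arrow maps. -/
def QuivRep.directSum {k : Type} [Field k] {V : Type} [Quiver.{0} V]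
    (M N : QuivRep k V) : QuivRep k V where
  space i := M.space i × N.space i
  map a := (M.map a).prodMap (N.map a)

/-- A representation is nonzero if some vertex space has a nonzero vector. -/
def QuivRep.Nonzero {k : Type} [Field k] {V : Type} [Quiver.{0} V]
    (M : QuivRep k V) : Prop :=
  ∃ (i : V) (x : M.space i), x ≠ 0

/-- Every endomorphism of `M_λ` (commuting family of linear maps) is scalar. -/
lemma Mlambda_endo_scalar (k : Type) [Field k] (lam : k) (h0 : lam ≠ 0)
    (f : ∀ i, (Mlambda k lam).space i →ₗ[k] (Mlambda k lam).space i)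
    (hf : ∀ (i j : Fin 7) (a : i ⟶ j),
      (f j).comp ((Mlambda k lam).map a) = ((Mlambda k lam).map a).comp (f i)) :
    ∀ (i : Fin 7) (x : (Mlambda k lam).space i), f i x = HSMul.hSMul (α := k) (f 0 (1:k)) x := by
  set a : k := f 0 (1:k) with ha
  -- pointwise commutation equations
  have h13 : f 2 ((1:k), (1:k)) = (a, a) := LinearMap.congr_fun (hf 0 2 .a13) (1:k)
  have h23 : f 2 ((1:k), (0:k)) = ((f 1 (1:k) : k), 0) :=
    LinearMap.congr_fun (hf 1 2 .a23) (1:k)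
  have h34 : ∀ v : k × k, f 3 v = f 2 v := fun v => LinearMap.congr_fun (hf 2 3 .a34) v
  have h45 : ∀ v : k × k, f 4 v = f 2 v := fun v =>
    (show f 4 v = f 3 v from LinearMap.congr_fun (hf 3 4 .a45) v).trans (h34 v)
  have h56 : ∀ v : k × k, f 5 v.1 = (f 2 v).1 := by
    intro v
    have := LinearMap.congr_fun (hf 4 5 .a56) v
    rw [show ((Mlambda k lam).map (show (4:Fin 7) ⟶ 5 from .a56)) = LinearMap.fst k k k from rfl] at this
    have h' : f 5 v.1 = (f 4 v).1 := this
    exact h'.trans (congrArg Prod.fst (h45 v))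
  have h57 : ∀ v : k × k, f 6 (v.1 + lam * v.2) = (f 2 v).1 + lam * (f 2 v).2 := by
    intro v
    have h := LinearMap.congr_fun (hf 4 6 .a57) v
    have h' : f 6 (v.1 + lam • v.2) = (f 4 v).1 + lam • (f 4 v).2 := h
    simpa [h45 v, smul_eq_mul] using h'
  -- scalars at the one-dimensional vertices
  have e1 := h56 ((1:k), (0:k))
  have e2 := h56 ((1:k), (1:k))
  rw [h23] at e1
  rw [h13] at e2
  simp only at e1 e2
  have hb : (f 1 (1:k) : k) = a := by rw [← e1, e2]
  rw [hb] at h23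
  -- scalar action on one-dimensional vertices
  have hone : ∀ (g : k →ₗ[k] k) (x : k), g x = (g 1) • x := by
    intro g x
    have := g.map_smul x 1
    simpa [smul_eq_mul, mul_comm] using this
  -- f 2 (0,1) = (0, a)
  have h01 : f 2 ((0:k), (1:k)) = (0, a) := by
    have hsub : ((0:k),(1:k)) = (((1:k),(1:k)) - ((1:k),(0:k)) : k × k) := by
      ext <;> norm_num
    have hres : ((a:k),(a:k)) - ((a:k),(0:k)) = (((0:k), a) : k × k) := by
      ext <;> simp
    erw [hsub, map_sub, h13, h23, hres]
  -- f 6 scalar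
  have hd : @Eq k (f 6 (1:k)) a := by
    have e3 := h57 ((0:k), (1:k))
    rw [h01] at e3
    have e3' : (f 6 lam : k) = lam * a := by simpa using e3
    have e5 := (hone (f 6) lam).symm.trans e3'
    rw [smul_eq_mul] at e5
    exact mul_right_cancel₀ h0 (e5.trans (mul_comm lam a))
  -- f 5 scalar
  have hc : (f 5 (1:k) : k) = a := by
    have := h56 ((1:k), (1:k))
    rw [h13] at this
    simpa using this
  -- value of f 2 on general vectors
  have h2 : ∀ v : k × k, f 2 v = a • v := by
    intro v
    have hv : v = v.1 • ((1:k),(0:k)) + v.2 • ((0:k),(1:k)) := by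
      ext <;> simp
    have ha0 : ((a:k), (0:k)) = a • (((1:k),(0:k)) : k × k) := by ext <;> simp
    have h0a : ((0:k), (a:k)) = a • (((0:k),(1:k)) : k × k) := by ext <;> simp
    erw [hv, map_add, map_smul, map_smul, h23, h01, ha0, h0a]
    exact (by rw [smul_comm v.1 a, smul_comm v.2 a, ← smul_add] : v.1 • a • ((1:k),(0:k)) + v.2 • a • ((0:k),(1:k)) = a • (v.1 • ((1:k),(0:k)) + v.2 • ((0:k),(1:k))))
  intro i x
  fin_cases i
  · exact hone (f 0) x
  · exact (hone (f 1) x).trans (congrArg (fun t : k => t • x) hb)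
  · exact h2 x
  · exact (h34 x).trans (h2 x)
  · exact (h45 x).trans (h2 x)
  · exact (hone (f 5) x).trans (congrArg (fun t : k => t • x) hc)
  · exact (hone (f 6) x).trans (congrArg (fun t : k => t • x) hd)

/-- For the canonically oriented quiver of type `D̃₆` over an algebraically closed
field `k` and `λ ∉ {0, 1}`, the representation `M_λ` is indecomposable: it is nonzero
and not isomorphic to a direct sum of two nonzero representations. -/
theorem Mlambda_indecomposable (k : Type) [Field k] [IsAlgClosed k]
    (lam : k) (h0 : lam ≠ 0) (h1 : lam ≠ 1) :
    (Mlambda k lam).Nonzero ∧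
    ¬ ∃ A B : QuivRep k (Fin 7), A.Nonzero ∧ B.Nonzero ∧
        (Mlambda k lam).IsIsoTo (A.directSum B) := by
  constructor
  · refine ⟨0, ?_, ?_⟩
    · show k
      exact 1
    · exact fun hh => one_ne_zero (α := k) hh
  rintro ⟨A, B, ⟨iA, xA, hxA⟩, ⟨iB, xB, hxB⟩, e, he⟩
  -- projection onto the A-component, conjugated back to M_λ
  let P : ∀ i, (A.directSum B).space i →ₗ[k] (A.directSum B).space i :=
    fun i => (LinearMap.inl k (A.space i) (B.space i)).comp
      (LinearMap.fst k (A.space i) (B.space i))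
  let f : ∀ i, (Mlambda k lam).space i →ₗ[k] (Mlambda k lam).space i :=
    fun i => ((e i).symm.toLinearMap.comp ((P i).comp (e i).toLinearMap))
  have hf : ∀ (i j : Fin 7) (a : i ⟶ j),
      (f j).comp ((Mlambda k lam).map a) = ((Mlambda k lam).map a).comp (f i) := by
    intro i j a
    ext x
    have hcomm : e j ((Mlambda k lam).map a x) = (A.directSum B).map a (e i x) :=
      LinearMap.congr_fun (he i j a) x
    have hP : ∀ w : (A.directSum B).space i,
        P j ((A.directSum B).map a w) = (A.directSum B).map a (P i w) := by
      intro w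
      have hz : B.map a (0 : B.space i) = 0 := map_zero _
      exact Prod.ext rfl hz.symm
    have hback : ∀ y : (Mlambda k lam).space i,
        (Mlambda k lam).map a y = (e j).symm ((A.directSum B).map a (e i y)) := by
      intro y
      have h' : e j ((Mlambda k lam).map a y) = (A.directSum B).map a (e i y) :=
        LinearMap.congr_fun (he i j a) y
      rw [← h', LinearEquiv.symm_apply_apply]
    show (e j).symm (P j (e j ((Mlambda k lam).map a x)))
        = (Mlambda k lam).map a ((e i).symm (P i (e i x)))
    rw [hcomm, hP, hback ((e i).symm (P i (e i x))), LinearEquiv.apply_symm_apply]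
  obtain hsc := Mlambda_endo_scalar k lam h0 f hf
  set a : k := f 0 (1:k) with ha
  -- idempotency: a * a = a, so a = 0 or a = 1
  have hidem : a * a = a := by
    have h1' : f 0 (f 0 (1:k)) = a • (a • (1:k)) := by
      rw [hsc 0 (f 0 (1:k)), hsc 0 (1:k)]; rfl
    have h2' : f 0 (f 0 (1:k)) = f 0 (1:k) := by
      show (e 0).symm (P 0 (e 0 ((e 0).symm (P 0 (e 0 (1:k))))))
          = (e 0).symm (P 0 (e 0 (1:k)))
      rw [LinearEquiv.apply_symm_apply]
      rfl
    have := h1'.symm.trans h2'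
    -- this : a • (a • 1) = a
    calc a * a = a • (a • (1:k)) := by rw [smul_eq_mul, smul_eq_mul, mul_one]
      _ = a := this.trans rfl
  have hcases : a = 0 ∨ a = 1 := by
    by_cases h : a = 0
    · exact Or.inl h
    · exact Or.inr (mul_left_cancel₀ h (by rw [hidem, mul_one]))
  rcases hcases with h | h
  · -- a = 0 : then A is zero at every vertex, contradicting xA ≠ 0
    apply hxA
    have hx := hsc iA ((e iA).symm ((xA, (0 : B.space iA))))
    rw [h, zero_smul] at hx
    have h2 : (e iA).symm (P iA (e iA ((e iA).symm ((xA, (0 : B.space iA)))))) = 0 := hx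
    erw [LinearEquiv.apply_symm_apply] at h2
    have hPx : P iA ((xA, (0 : B.space iA))) = (xA, (0 : B.space iA)) := rfl
    rw [hPx] at h2
    have h3 : (xA, (0 : B.space iA)) = (0 : A.space iA × B.space iA) :=
      (LinearEquiv.map_eq_zero_iff (e iA).symm).mp h2
    exact congrArg Prod.fst h3
  · -- a = 1 : then B is zero at every vertex, contradicting xB ≠ 0
    apply hxB
    have hx := hsc iB ((e iB).symm (((0 : A.space iB), xB)))
    have h3 := congrArg (e iB) hx
    have h5 : e iB (f iB ((e iB).symm (((0 : A.space iB), xB))))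
        = P iB (e iB ((e iB).symm (((0 : A.space iB), xB)))) :=
      LinearEquiv.apply_symm_apply (e iB) _
    erw [h5, LinearEquiv.apply_symm_apply, map_smul, LinearEquiv.apply_symm_apply] at h3
    have h4 : (0 : B.space iB) = a • xB := congrArg Prod.snd h3
    rw [h, one_smul] at h4
    exact h4.symm
end

section
/- For the canonically oriented quiver Q of type D̃_6, the representations M_0 and M_1 are not isomorphic, and more generally M_{λ_1} ≇ M_{λ_2} whenever λ_1 ≠ λ_2 in k. -/
open Quiver

/-- For the canonically oriented quiver of type `D̃₆` over an algebraically closed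
field `k`, the representations `M_{λ₁}` and `M_{λ₂}` are not isomorphic whenever
`λ₁ ≠ λ₂`; in particular `M₀ ≇ M₁`. -/
theorem Mlambda_not_iso (k : Type) [Field k] [IsAlgClosed k]
    (lam₁ lam₂ : k) (h : lam₁ ≠ lam₂) :
    ¬ (Mlambda k lam₁).IsIsoTo (Mlambda k lam₂) := by
  rintro ⟨e, he⟩
  have h13 := LinearMap.congr_fun (he 0 2 .a13) (show k from 1)
  have h23 := LinearMap.congr_fun (he 1 2 .a23) (show k from 1)
  have h34 := fun (v : k × k) => LinearMap.congr_fun (he 2 3 .a34) v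
  have h45 := fun (v : k × k) => LinearMap.congr_fun (he 3 4 .a45) v
  have h56 := fun (v : k × k) => LinearMap.congr_fun (he 4 5 .a56) v
  have h57 := fun (v : k × k) => LinearMap.congr_fun (he 4 6 .a57) v
  simp only [Mlambda, LinearMap.comp_apply, LinearEquiv.coe_coe, LinearMap.id_apply,
    LinearMap.prod_apply, Function.prod, LinearMap.zero_apply, LinearMap.add_apply,
    LinearMap.smul_apply, LinearMap.fst_apply, LinearMap.snd_apply, smul_eq_mul] at h13 h23 h34 h45 h56 h57
  have h13' : (e 2) ((1:k),(1:k)) = ((e 0) (1:k), (e 0) (1:k)) := h13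
  have h23' : (e 2) ((1:k),(0:k)) = ((e 1) (1:k), 0) := h23
  have h34' : ∀ v : k × k, (e 3) v = (e 2) v := h34
  have h45' : ∀ v : k × k, (e 4) v = (e 3) v := h45
  have h56' : ∀ v : k × k, (e 5) v.1 = ((e 4) v).1 := h56
  have h57' : ∀ v : k × k, (e 6) (v.1 + lam₁ * v.2)
      = ((e 4) v).1 + lam₂ * ((e 4) v).2 := h57
  have e42 : ∀ v : k × k, (e 4) v = (e 2) v := fun v => (h45' v).trans (h34' v)
  set a : k := (e 0) (1:k) with ha
  set b : k := (e 1) (1:k) with hb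
  have key01 : (e 2) ((0:k),(1:k)) = (a - b, a) := by
    have hsub : ((0:k),(1:k)) = ((1:k),(1:k)) - ((1:k),(0:k)) := by
      simp [Prod.ext_iff]
    rw [hsub]
    erw [map_sub, h13', h23']
    exact Prod.ext rfl (sub_zero a)
  -- a = b
  have hab : a = b := by
    have := h56' ((0:k),(1:k))
    rw [e42, key01] at this
    simp only [map_zero] at this
    exact sub_eq_zero.mp (this.symm.trans ((e 5).map_zero))
  -- e 6 1 = b
  have h6one : (e 6) (1:k) = b := by
    have := h57' ((1:k),(0:k))
    rw [e42, h23'] at this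
    simpa using this
  -- lam₁ * b = lam₂ * b
  have hkey : lam₁ * b = lam₂ * b := by
    have := h57' ((0:k),(1:k))
    rw [e42, key01] at this
    rw [hab, sub_self, zero_add, zero_add, mul_one] at this
    have hsm : (e 6) (lam₁ * (1:k)) = lam₁ * (show k from (e 6) (show k from 1)) :=
      map_smul (e 6) lam₁ (show k from 1)
    rw [mul_one, h6one] at hsm
    rw [hsm] at this
    exact this
  have hbne : b ≠ 0 := by
    intro hb0
    have h10 : (e 1) (show k from 1) = (e 1) (show k from 0) := by
      erw [map_zero]
      exact hb ▸ hb0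
    exact one_ne_zero (show (1:k) = 0 from (e 1).injective h10)
  exact h (mul_right_cancel₀ hbne hkey)
end
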